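/- arXiv:1603.09713 — 2 statements merged into one kernel-verified Lean document; each statement's English description precedes it below -/
import Mathlib

section
/- Let P be a partial field, let M be a matroid, let B be a basis of M with B* = E(M)−B, and let A be a B×B* matrix over P such that, for distinct a,b ∈ B*, the matrices A−a and A−b are P-matrices with M∖a = M[I|(A−a)] and M∖b = M[I|(A−b)]. Suppose that {a,b,x,y} incriminates (M,A), where {x,y} ⊆ B and {a,b} ⊆ B*. Then A_{ij} ≠ 0 for all i ∈ {x,y} and j ∈ {a,b}. -/
open Set Matroid

namespace ExcludedMinorsFragile

variable {α : Type*}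

/-! ### Basic matroid operations not present in this Mathlib version -/

/-- Deletion of a set of elements from a matroid. -/
noncomputable def del (M : Matroid α) (D : Set α) : Matroid α := M ↾ (M.E \ D)

/-- Contraction of a set of elements in a matroid. -/
noncomputable def con (M : Matroid α) (C : Set α) : Matroid α := (M✶ ↾ (M.E \ C))✶

/-- The extended rank of a set in a matroid. -/
noncomputable def eRk (M : Matroid α) (X : Set α) : ℕ∞ :=
  ⨆ I ∈ {I : Set α | M.Indep I ∧ I ⊆ X}, I.encard

/-- `N` is (literally) a minor of `M`. -/
def IsMinorOf (N M : Matroid α) : Prop :=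
  ∃ C D : Set α, Disjoint C D ∧ C ⊆ M.E ∧ D ⊆ M.E ∧ N = del (con M C) D

/-- Isomorphism of matroids (on the same type). -/
def MatIso (M N : Matroid α) : Prop :=
  ∃ f : α → α, Set.BijOn f M.E N.E ∧ ∀ I, I ⊆ M.E → (M.Indep I ↔ N.Indep (f '' I))

/-- `M` has a minor isomorphic to `N`. -/
def HasNMinor (M N : Matroid α) : Prop :=
  ∃ M' : Matroid α, IsMinorOf M' M ∧ MatIso M' N

/-! ### Connectivity -/

/-- A (Tutte) `k`-separation of `M`. -/
def KSep (M : Matroid α) (k : ℕ) (X Y : Set α) : Prop :=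
  Disjoint X Y ∧ X ∪ Y = M.E ∧ (k : ℕ∞) ≤ X.encard ∧ (k : ℕ∞) ≤ Y.encard ∧
    eRk M X + eRk M Y + 1 ≤ eRk M M.E + k

/-- A matroid is `3`-connected if it has no `k`-separation for `k < 3`. -/
def ThreeConnected (M : Matroid α) : Prop :=
  ∀ (k : ℕ) (X Y : Set α), k < 3 → ¬ KSep M k X Y

/-- An exact 3-separation (both sides of size at least 3, connectivity exactly two). -/
def Sep3 (M : Matroid α) (X Y : Set α) : Prop :=
  Disjoint X Y ∧ X ∪ Y = M.E ∧ (3 : ℕ∞) ≤ X.encard ∧ (3 : ℕ∞) ≤ Y.encard ∧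
    eRk M X + eRk M Y ≤ eRk M M.E + 2

/-! ### Circuits, triangles, triads, segments -/

/-- A circuit : a minimal dependent set. -/
def Circuit (M : Matroid α) (C : Set α) : Prop :=
  C ⊆ M.E ∧ ¬ M.Indep C ∧ ∀ x ∈ C, M.Indep (C \ {x})

/-- A triangle : a 3-element circuit. -/
def IsTriangle (M : Matroid α) (T : Set α) : Prop :=
  Circuit M T ∧ T.encard = 3

/-- A triad : a 3-element cocircuit. -/
def IsTriad (M : Matroid α) (T : Set α) : Prop :=
  Circuit M✶ T ∧ T.encard = 3

/-- A cosegment : every 3-element subset is a triad. -/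
def Cosegment (M : Matroid α) (C : Set α) : Prop :=
  C ⊆ M.E ∧ ∀ T ⊆ C, T.encard = 3 → IsTriad M T

/-! ### Parallel and series classes, simplification and cosimplification -/

/-- Two elements are parallel if they are nonloops with the same closure. -/
def Parallel (M : Matroid α) (e f : α) : Prop :=
  M.Indep {e} ∧ M.Indep {f} ∧ M.closure {e} = M.closure {f}

/-- A parallel class of `M`. -/
def ParallelClass (M : Matroid α) (S : Set α) : Prop :=
  ∃ e, M.Indep {e} ∧ S = {f | Parallel M e f}

/-- A series class of `M` : a parallel class of the dual. -/
def SeriesClass (M : Matroid α) (S : Set α) : Prop :=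
  ParallelClass M✶ S

/-- A transversal of the parallel classes of `M`; restricting to such a set gives
a simplification `si(M)` of `M`. -/
def SimpTransversal (M : Matroid α) (S : Set α) : Prop :=
  (∀ e ∈ S, M.Indep {e}) ∧ ∀ e, M.Indep {e} → ∃! f, f ∈ S ∧ Parallel M e f

/-- The cosimplification of `M` determined by the transversal `S` of the
series classes of `M`: `co(M) = (si(M✶))✶`. -/
noncomputable def coOf (M : Matroid α) (S : Set α) : Matroid α := (M✶ ↾ S)✶

/-- `si(M)` is 3-connected. -/
def SiThreeConnected (M : Matroid α) : Prop :=
  ∃ S, SimpTransversal M S ∧ ThreeConnected (M ↾ S)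

/-- `co(M)` is 3-connected. -/
def CoThreeConnected (M : Matroid α) : Prop :=
  ∃ S, SimpTransversal M✶ S ∧ ThreeConnected (coOf M S)

/-- `si(M)` is 3-connected and has an `N`-minor. -/
def SiThreeConnectedWith (N M : Matroid α) : Prop :=
  ∃ S, SimpTransversal M S ∧ ThreeConnected (M ↾ S) ∧ HasNMinor (M ↾ S) N

/-- `co(M)` is 3-connected and has an `N`-minor. -/
def CoThreeConnectedWith (N M : Matroid α) : Prop :=
  ∃ S, SimpTransversal M✶ S ∧ ThreeConnected (coOf M S) ∧ HasNMinor (coOf M S) N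

/-- `M` is 3-connected up to series pairs: `co(M)` is 3-connected and every non-trivial
series class of `M` has exactly two elements. -/
def ThreeConnUpToSeriesPairs (M : Matroid α) : Prop :=
  CoThreeConnected M ∧ ∀ S, SeriesClass M S → 2 ≤ S.encard → S.encard = 2

/-- `Q` is isomorphic to the uniform matroid `U_{1,3}`. -/
def IsoU13 (Q : Matroid α) : Prop :=
  Q.E.encard = 3 ∧ (∀ e ∈ Q.E, Q.Indep {e}) ∧
    ∀ e ∈ Q.E, ∀ f ∈ Q.E, e ≠ f → ¬ Q.Indep {e, f}

/-! ### Wheels and whirls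

By Tutte's characterisation, a 3-connected matroid with at least four elements is a wheel
or a whirl if and only if every element is in both a triangle and a triad. -/

def WheelOrWhirl (N : Matroid α) : Prop :=
  ThreeConnected N ∧ ∀ e ∈ N.E,
    (∃ T, IsTriangle N T ∧ e ∈ T) ∧ (∃ T, IsTriad N T ∧ e ∈ T)

/-! ### N-minors: deletable, contractible, flexible, fragile -/

def NDeletable (N M : Matroid α) (e : α) : Prop := HasNMinor (del M {e}) N

def NContractible (N M : Matroid α) (e : α) : Prop := HasNMinor (con M {e}) N

def NFlexible (N M : Matroid α) (e : α) : Prop := NDeletable N M e ∧ NContractible N M e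

/-- `M` is (strictly) `N`-fragile: `M` has an `N`-minor and no element is `N`-flexible. -/
def NFragile (N M : Matroid α) : Prop :=
  HasNMinor M N ∧ ∀ e ∈ M.E, ¬ NFlexible N M e

variable {α : Type*}

/-! ### Partial fields -/

/-- A partial field: a commutative ring together with a subgroup of its units containing `-1`. -/
structure PartialField where
  R : Type
  [commRing : CommRing R]
  G : Subgroup Rˣ
  neg_one_mem : -1 ∈ G

attribute [instance] PartialField.commRing

/-- The set of elements of a partial field: the members of `G` together with `0`. -/
def PartialField.carrier (P : PartialField) : Set P.R :=
  {x | x = 0 ∨ ∃ u ∈ P.G, (u : P.R) = x}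

/-- The determinant of the square submatrix of `A` with rows `Xz` and columns `Yz`,
with columns matched to rows via the bijection `e`. -/
noncomputable def subdet (P : PartialField) (A : α → α → P.R) (Xz Yz : Finset α)
    (e : {x // x ∈ Xz} ≃ {y // y ∈ Yz}) : P.R :=
  letI : DecidableEq {x // x ∈ Xz} := Classical.decEq _
  Matrix.det (Matrix.of fun i j : {x // x ∈ Xz} => A (i : α) ((e j : α)))

/-- `A` is a `P`-matrix with row set `X` and column set `Y`: every square submatrix has
determinant in `P`. -/
def IsPMatrix (P : PartialField) (X Y : Set α) (A : α → α → P.R) : Prop :=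
  ∀ (Xz Yz : Finset α), ↑Xz ⊆ X → ↑Yz ⊆ Y →
    ∀ e : {x // x ∈ Xz} ≃ {y // y ∈ Yz}, subdet P A Xz Yz e ∈ P.carrier

/-- The square submatrix `A[Z]` (rows `X ∩ Z`, columns `Y ∩ Z`) has nonzero determinant. -/
def NonzeroSubdet (P : PartialField) (A : α → α → P.R) (X Y Z : Set α) : Prop :=
  ∃ (Xz Yz : Finset α) (e : {x // x ∈ Xz} ≃ {y // y ∈ Yz}),
    ↑Xz = X ∩ Z ∧ ↑Yz = Y ∩ Z ∧ subdet P A Xz Yz e ≠ 0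

/-- `M = M[I|A]`, where `A` has row set `X` and column set `Y`:  the ground set of `M` is
`X ∪ Y` and the bases of `M` are `X` together with the sets `X △ Z` for `Z ⊆ X ∪ Y` with
`|X ∩ Z| = |Y ∩ Z|` and `det A[Z] ≠ 0`. -/
def Represents (P : PartialField) (X Y : Set α) (A : α → α → P.R) (M : Matroid α) : Prop :=
  Disjoint X Y ∧ M.E = X ∪ Y ∧
    ∀ Bs : Set α, M.IsBase Bs ↔
      (Bs = X ∨ ∃ Z ⊆ X ∪ Y, Bs = symmDiff X Z ∧ (X ∩ Z).encard = (Y ∩ Z).encard ∧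
        NonzeroSubdet P A X Y Z)

/-- `M` is `P`-representable. -/
def PRep (P : PartialField) (M : Matroid α) : Prop :=
  ∃ (X Y : Set α) (A : α → α → P.R), IsPMatrix P X Y A ∧ Represents P X Y A M

/-- `M` is an excluded minor for the class of `P`-representable matroids. -/
def ExcludedMinor (P : PartialField) (M : Matroid α) : Prop :=
  ¬ PRep P M ∧ ∀ C D : Set α, Disjoint C D → C ⊆ M.E → D ⊆ M.E → (C ∪ D).Nonempty →
    PRep P (del (con M C) D)

/-- Two matrices with row set `X` and column set `Y` are scaling equivalent. -/
def ScalingEquiv (P : PartialField) (X Y : Set α) (A1 A2 : α → α → P.R) : Prop :=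
  ∃ r c : α → P.Rˣ, (∀ i ∈ X, r i ∈ P.G) ∧ (∀ j ∈ Y, c j ∈ P.G) ∧
    ∀ i ∈ X, ∀ j ∈ Y, A2 i j = (r i : P.R) * A1 i j * (c j : P.R)

/-- `N` is a `P`-stabilizer for the class of `P`-representable matroids. -/
def IsStabilizer (P : PartialField) (N : Matroid α) : Prop :=
  ThreeConnected N ∧ PRep P N ∧
  ∀ (M N' : Matroid α), ThreeConnected M → PRep P M → MatIso N' N → IsMinorOf N' M →
    ∀ (X Y X' Y' : Set α) (A1 A2 : α → α → P.R),
      N'.E = X' ∪ Y' → N'.IsBase X' → X' ⊆ X → Y' ⊆ Y →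
      IsPMatrix P X Y A1 → IsPMatrix P X Y A2 →
      Represents P X Y A1 M → Represents P X Y A2 M →
      Represents P X' Y' A1 N' → Represents P X' Y' A2 N' →
      ScalingEquiv P X' Y' A1 A2 →
      ScalingEquiv P X Y A1 A2

/-- `N` is a strong `P`-stabilizer: a `P`-stabilizer such that every `P`-representation of `N`
extends to a `P`-representation of every 3-connected `P`-representable matroid with an
`N`-minor. -/
def IsStrongStabilizer (P : PartialField) (N : Matroid α) : Prop :=
  IsStabilizer P N ∧
  ∀ (M N' : Matroid α), ThreeConnected M → PRep P M → MatIso N' N → IsMinorOf N' M →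
    ∀ (X' Y' : Set α) (A' : α → α → P.R),
      N'.E = X' ∪ Y' → N'.IsBase X' → IsPMatrix P X' Y' A' → Represents P X' Y' A' N' →
      ∃ (X Y : Set α) (A : α → α → P.R), X' ⊆ X ∧ Y' ⊆ Y ∧ IsPMatrix P X Y A ∧
        Represents P X Y A M ∧ ∀ i ∈ X', ∀ j ∈ Y', A i j = A' i j

/-- `Z` incriminates the pair `(M, A)`, where `A` is a `B × (E(M) − B)` matrix. -/
def Incriminates (P : PartialField) (M : Matroid α) (B : Set α) (A : α → α → P.R)
    (Z : Set α) : Prop :=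
  Z ⊆ M.E ∧ ∃ (Xz Yz : Finset α) (e : {x // x ∈ Xz} ≃ {y // y ∈ Yz}),
    ↑Xz = B ∩ Z ∧ ↑Yz = (M.E \ B) ∩ Z ∧
    (subdet P A Xz Yz e ∉ P.carrier ∨
     (subdet P A Xz Yz e = 0 ∧ M.IsBase (symmDiff B Z)) ∨
     (subdet P A Xz Yz e ≠ 0 ∧ M.Dep (symmDiff B Z)))

/-! ### Companion matrices and the Setup -/

/-- `A` is a companion matrix for the excluded minor `M` with deletion pair `{a,b}`,
relative to the basis `B` of `M ∖ {a,b}` and stabilizer `N`. -/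
structure IsCompanion (P : PartialField) (M N : Matroid α) (a b : α) (B : Set α)
    (A : α → α → P.R) : Prop where
  pMata : IsPMatrix P B ((M.E \ B) \ {a}) A
  pMatb : IsPMatrix P B ((M.E \ B) \ {b}) A
  repa : Represents P B ((M.E \ B) \ {a}) A (del M {a})
  repb : Represents P B ((M.E \ B) \ {b}) A (del M {b})
  repN : ∃ (N' : Matroid α) (X' Y' : Set α), MatIso N' N ∧
      IsMinorOf N' (del M {a, b}) ∧ N'.E = X' ∪ Y' ∧ N'.IsBase X' ∧
      X' ⊆ B ∧ Y' ⊆ (M.E \ B) \ {a, b} ∧ IsPMatrix P X' Y' A ∧ Represents P X' Y' A N'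

/-- The Setup: `N` is a 3-connected strong `P`-stabilizer with at least 4 elements that is
neither a wheel nor a whirl; `M` is an excluded minor for `P`-representability; `{a,b}` is a
deletion pair with `M ∖ {a,b}` 3-connected with an `N`-minor; `B` is a basis of `M ∖ {a,b}`;
`A` is a companion matrix for `M`; and `{a,b,x,y}` incriminates `(M,A)` with `x,y ∈ B`. -/
structure Setup (P : PartialField) (M N : Matroid α) (a b x y : α) (B : Set α)
    (A : α → α → P.R) : Prop where
  mFin : M.Finite
  nFin : N.Finite
  hN3 : ThreeConnected N
  hNcard : 4 ≤ N.E.encard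
  hStrong : IsStrongStabilizer P N
  hNW : ¬ WheelOrWhirl N
  hab : a ≠ b
  haE : a ∈ M.E
  hbE : b ∈ M.E
  hExcl : ExcludedMinor P M
  h3conn : ThreeConnected (del M {a, b})
  hNminor : HasNMinor (del M {a, b}) N
  hB : (del M {a, b}).IsBase B
  hComp : IsCompanion P M N a b B A
  hx : x ∈ B
  hy : y ∈ B
  hxy : x ≠ y
  hInc : Incriminates P M B A {a, b, x, y}

/-! ### Robust and strong elements -/

/-- `e` is an `(N,B)`-robust element of `M'`. -/
def Robust (N M' : Matroid α) (B : Set α) (e : α) : Prop :=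
  (e ∈ B ∧ HasNMinor (con M' {e}) N) ∨ (e ∈ M'.E \ B ∧ HasNMinor (del M' {e}) N)

/-- `e` is an `(N,B)`-strong element of `M'`. -/
def Strong (N M' : Matroid α) (B : Set α) (e : α) : Prop :=
  (e ∈ B ∧ SiThreeConnectedWith N (con M' {e})) ∨
  (e ∈ M'.E \ B ∧ CoThreeConnectedWith N (del M' {e}))

/-- An admissible tuple for the excluded minor `M` with deletion pair `{a,b}`:
a basis `B` of `M ∖ {a,b}`, a companion matrix `A`, and elements `x, y ∈ B`
such that `{a,b,x,y}` incriminates `(M,A)`. -/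
def Admissible (P : PartialField) (M N : Matroid α) (a b : α) (B : Set α)
    (A : α → α → P.R) (x y : α) : Prop :=
  (del M {a, b}).IsBase B ∧ IsCompanion P M N a b B A ∧ x ∈ B ∧ y ∈ B ∧ x ≠ y ∧
    Incriminates P M B A {a, b, x, y}

/-- `B` (with companion matrix `A` and incriminating pair `x,y`) is a robust basis for `M`:
no admissible tuple has more robust elements outside its incriminating pair. -/
def RobustBasis (P : PartialField) (M N : Matroid α) (a b : α) (B : Set α)
    (A : α → α → P.R) (x y : α) : Prop :=
  Admissible P M N a b B A x y ∧
  ∀ (B' : Set α) (A' : α → α → P.R) (x' y' : α), Admissible P M N a b B' A' x' y' →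
    {e ∈ (del M {a, b}).E | Robust N (del M {a, b}) B' e ∧ e ∉ ({x', y'} : Set α)}.encard ≤
    {e ∈ (del M {a, b}).E | Robust N (del M {a, b}) B e ∧ e ∉ ({x, y} : Set α)}.encard

/-! ### Confining sets -/

/-- A confining set of `M'` (relative to the basis `B` and the incriminating pair `x,y`). -/
def ConfiningSet (N M' : Matroid α) (B : Set α) (x y : α) (G : Set α) : Prop :=
  G ⊆ M'.E ∧ G ∩ B = {x, y} ∧
  ∃ T T' : Set α, IsTriad M' T ∧ IsTriad M' T' ∧ G = T ∪ T' ∧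
    ((T ∩ T').encard = 1 ∨ (T ∩ T').encard = 2) ∧
    G ⊆ M'✶.closure (G \ B) ∧
    ((T ∩ T').encard = 1 → ∃ u ∈ G \ B, Strong N M' B u)

/-! ### Binary matroids, 2-sums and `N`-stability -/

/-- The partial field `GF(2)`. -/
def GF2 : PartialField := { R := ZMod 2, G := ⊤, neg_one_mem := Subgroup.mem_top _ }

/-- A binary matroid : one representable over `GF(2)`. -/
def Binary (Q : Matroid α) : Prop := PRep GF2 Q

/-- `M` is the 2-sum of `MX` and `MY` along the basepoint `p`, characterised by circuits. -/
def IsTwoSumOf (M MX MY : Matroid α) (p : α) : Prop :=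
  p ∉ M.E ∧ MX.E ∩ MY.E = {p} ∧ M.E = (MX.E ∪ MY.E) \ {p} ∧
  ∀ C : Set α, Circuit M C ↔
    ((Circuit MX C ∧ p ∉ C) ∨ (Circuit MY C ∧ p ∉ C) ∨
      ∃ C1 C2, Circuit MX C1 ∧ Circuit MY C2 ∧ p ∈ C1 ∧ p ∈ C2 ∧
        C = (C1 \ {p}) ∪ (C2 \ {p}))

/-- `Q` is `N`-stable: `Q` has an `N`-minor and, for every 2-separation `(X,Y)` of `Q` with
`|X ∩ E(N)| ≤ 1` (for an embedded copy of `N`), the matroid corresponding to `X` in the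
1- or 2-sum decomposition of `Q` induced by `(X,Y)` is binary. -/
def NStable (N Q : Matroid α) : Prop :=
  HasNMinor Q N ∧
  ∀ N' : Matroid α, IsMinorOf N' Q → MatIso N' N →
    ∀ X Y : Set α, KSep Q 2 X Y → (X ∩ N'.E).encard ≤ 1 →
      ((eRk Q X + eRk Q Y ≤ eRk Q Q.E → Binary (Q ↾ X)) ∧
        ∀ (MX MY : Matroid α) (p : α), IsTwoSumOf Q MX MY p → MX.E = insert p X →
          Binary MX)

/-- An unstable series pair of `M' ∖ u` (where `M' = M ∖ {a,b}`): a 2-element series class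
`S` of `M' ∖ u` with some element of `{a,b}` in the closure of `S` in `M`. -/
def UnstableSeriesPair (M : Matroid α) (a b u : α) (S : Set α) : Prop :=
  SeriesClass (del M {a, b, u}) S ∧ S.encard = 2 ∧
    (a ∈ M.closure S ∨ b ∈ M.closure S)

/-! ### Vertical 3-separations -/

/-- A vertical 3-separation `(X, z, Y)` of `M`. -/
def VertSep3 (M : Matroid α) (X : Set α) (z : α) (Y : Set α) : Prop :=
  Disjoint X Y ∧ z ∉ X ∧ z ∉ Y ∧ insert z (X ∪ Y) = M.E ∧
    Sep3 M (insert z X) Y ∧ Sep3 M X (insert z Y) ∧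
    3 ≤ eRk M X ∧ 3 ≤ eRk M Y ∧ z ∈ M.closure X ∧ z ∈ M.closure Y

/-- `Y` is `z`-closed: `Y = cl*(Y)` and `Y = cl(Y) − {z}`. -/
def ZClosed (M : Matroid α) (z : α) (Y : Set α) : Prop :=
  M✶.closure Y = Y ∧ M.closure Y \ {z} = Y

/-! ### Fans -/

/-- `(f1,f2,f3,f4)` is a type-II fan of `M` relative to the basis `B` : `{f1,f2,f3}` is a
triangle, `{f2,f3,f4}` is a triad, and `B ∩ {f1,f2,f3,f4} = {f1,f3,f4}`. -/
def TypeIIFan (M : Matroid α) (B : Set α) (f1 f2 f3 f4 : α) : Prop :=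
  f1 ≠ f2 ∧ f1 ≠ f3 ∧ f1 ≠ f4 ∧ f2 ≠ f3 ∧ f2 ≠ f4 ∧ f3 ≠ f4 ∧
    IsTriangle M {f1, f2, f3} ∧ IsTriad M {f2, f3, f4} ∧
    B ∩ {f1, f2, f3, f4} = {f1, f3, f4}

/-- The 4-element fan `(f1,f2,f3,f4)` (with `{f1,f2,f3}` a triangle and `{f2,f3,f4}` a triad)
is maximal : it cannot be extended to a 5-element fan. -/
def MaximalFan4 (M : Matroid α) (f1 f2 f3 f4 : α) : Prop :=
  ¬ ∃ g, g ∉ ({f1, f2, f3, f4} : Set α) ∧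
    (IsTriad M {g, f1, f2} ∨ IsTriangle M {f3, f4, g})

/-! ### Paths of 3-separations -/

/-- The union of a list of sets. -/
def listUnion (l : List (Set α)) : Set α := l.foldr (· ∪ ·) ∅

/-- A path of 3-separations of `M`: a partition `(P1, …, Pn)` of `E(M)` such that each
prefix is exactly 3-separating. -/
def PathOf3Seps (M : Matroid α) (l : List (Set α)) : Prop :=
  l.Pairwise Disjoint ∧ listUnion l = M.E ∧
    ∀ i : ℕ, 1 ≤ i → i < l.length →
      Sep3 M (listUnion (l.take i)) (listUnion (l.drop i))

/-! ### Splitter sequences -/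

/-- A splitter sequence for `R` in `Q`: disjoint sets `C`, `D` with `Q / C ∖ D ≅ R`, and an
ordering `l` of `C ∪ D` along which every intermediate minor is 3-connected. -/
def SplitterSeq (Q R : Matroid α) (C D : Set α) (l : List α) : Prop :=
  Disjoint C D ∧ C ⊆ Q.E ∧ D ⊆ Q.E ∧ l.Nodup ∧ {x | x ∈ l} = C ∪ D ∧
    MatIso (del (con Q C) D) R ∧
    ∀ i ≤ l.length,
      ThreeConnected (del (con Q (C ∩ {x | x ∈ l.take i})) (D ∩ {x | x ∈ l.take i}))

/-! ### Δ-Y and Y-Δ exchanges -/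

/-- A flat of a matroid. -/
def IsFlat (M : Matroid α) (F : Set α) : Prop := F ⊆ M.E ∧ M.closure F = F

/-- `Q` is isomorphic to the cycle matroid `M(K4)` with `T` a (specified) triangle:
there is a labelling of the six edges of `K4` by the elements of `Q` under which the
circuits of `Q` are exactly the edge sets of the cycles of `K4`. -/
def IsMK4 (Q : Matroid α) (T : Set α) : Prop :=
  ∃ g : Fin 4 → Fin 4 → α,
    (∀ u v, g u v = g v u) ∧
    (∀ u v u' v', u ≠ v → u' ≠ v' → g u v = g u' v' → ((u = u' ∧ v = v') ∨ (u = v' ∧ v = u'))) ∧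
    Q.E = {x | ∃ u v, u ≠ v ∧ x = g u v} ∧
    T = {g 0 1, g 0 2, g 1 2} ∧
    ∀ C : Set α, Circuit Q C ↔
      ((∃ u v w, u ≠ v ∧ u ≠ w ∧ v ≠ w ∧ C = {g u v, g v w, g u w}) ∨
       (∃ u v w z, u ≠ v ∧ u ≠ w ∧ u ≠ z ∧ v ≠ w ∧ v ≠ z ∧ w ≠ z ∧
          C = {g u v, g v w, g w z, g z u}))

/-- `Pc` is the generalized parallel connection of `M1` and `M2` across the common
restriction `T`: its flats are the sets whose traces on `E(M1)` and `E(M2)` are flats. -/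
def IsGenParallelConn (M1 M2 Pc : Matroid α) (T : Set α) : Prop :=
  M1.E ∩ M2.E = T ∧ Pc.E = M1.E ∪ M2.E ∧
    ∀ F : Set α, IsFlat Pc F ↔ (IsFlat M1 (F ∩ M1.E) ∧ IsFlat M2 (F ∩ M2.E))

/-- `DM` is obtained from `M` by a Δ-Y exchange on the triangle `T`:
`DM = P_T(M(K4), M) ∖ T`. -/
def IsDeltaY (T : Set α) (M DM : Matroid α) : Prop :=
  IsTriangle M T ∧ ∃ K Pc : Matroid α, IsMK4 K T ∧ K.E ∩ M.E = T ∧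
    IsGenParallelConn K M Pc T ∧ DM = del Pc T

/-- `NQ` is obtained from `Q` by a Y-Δ exchange on the triad `T`: `∇_T(Q) = (Δ_T(Q✶))✶`. -/
def IsNablaY (T : Set α) (Q NQ : Matroid α) : Prop :=
  IsDeltaY T Q✶ NQ✶


/-! ### Auxiliary lemmas for statement 5 -/

section Statement5Aux

variable {α : Type*}

private def uniqueOfCoeSingleton {u : α} {Xz : Finset α} (h : (↑Xz : Set α) = {u}) :
    Unique {z // z ∈ Xz} where
  default := ⟨u, by rw [← Finset.mem_coe, h]; exact rfl⟩
  uniq := fun z => Subtype.ext (by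
    have hz : (z : α) ∈ (↑Xz : Set α) := Finset.mem_coe.mpr z.2
    rw [h] at hz
    exact hz)

private lemma coe_eq_of_coeSingleton {u : α} {Xz : Finset α} (h : (↑Xz : Set α) = {u})
    (z : {z // z ∈ Xz}) : (z : α) = u := by
  have hz : (z : α) ∈ (↑Xz : Set α) := Finset.mem_coe.mpr z.2
  rw [h] at hz
  exact hz

private lemma subdet_singleton (P : PartialField) (A : α → α → P.R) {u v : α}
    {Xz Yz : Finset α} (hX : (↑Xz : Set α) = {u}) (hY : (↑Yz : Set α) = {v})
    (e : {x // x ∈ Xz} ≃ {y // y ∈ Yz}) : subdet P A Xz Yz e = A u v := by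
  haveI := uniqueOfCoeSingleton hX
  unfold subdet
  rw [@Matrix.det_unique P.R _ _ (uniqueOfCoeSingleton hX) (Classical.decEq _) _]
  simp only [Matrix.of_apply]
  rw [coe_eq_of_coeSingleton hY, coe_eq_of_coeSingleton hX]

private lemma entry_mem_carrier {P : PartialField} {X Y : Set α} {A : α → α → P.R}
    (hP : IsPMatrix P X Y A) {i j : α} (hi : i ∈ X) (hj : j ∈ Y) : A i j ∈ P.carrier := by
  haveI U1 : Unique {z // z ∈ ({i} : Finset α)} := uniqueOfCoeSingleton (Finset.coe_singleton i)
  haveI U2 : Unique {z // z ∈ ({j} : Finset α)} := uniqueOfCoeSingleton (Finset.coe_singleton j)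
  have h := hP {i} {j}
    (by rw [Finset.coe_singleton]; exact Set.singleton_subset_iff.mpr hi)
    (by rw [Finset.coe_singleton]; exact Set.singleton_subset_iff.mpr hj)
    (Equiv.ofUnique _ _)
  rwa [subdet_singleton P A (Finset.coe_singleton i) (Finset.coe_singleton j)] at h

private lemma mul_mem_carrier {P : PartialField} {x y : P.R}
    (hx : x ∈ P.carrier) (hy : y ∈ P.carrier) : x * y ∈ P.carrier := by
  rcases hx with rfl | ⟨u, hu, rfl⟩
  · exact Or.inl (zero_mul _)
  rcases hy with rfl | ⟨v, hv, rfl⟩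
  · exact Or.inl (mul_zero _)
  exact Or.inr ⟨u * v, mul_mem hu hv, (Units.val_mul u v)⟩

private lemma neg_mem_carrier {P : PartialField} {x : P.R}
    (hx : x ∈ P.carrier) : -x ∈ P.carrier := by
  rcases hx with rfl | ⟨u, hu, rfl⟩
  · exact Or.inl neg_zero
  refine Or.inr ⟨(-1) * u, mul_mem P.neg_one_mem hu, ?_⟩
  rw [Units.val_mul, Units.val_neg, Units.val_one]
  ring

private lemma subdet_pair (P : PartialField) (A : α → α → P.R) {u v s t : α}
    (huv : u ≠ v) (_hst : s ≠ t) {Xz Yz : Finset α}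
    (hX : (↑Xz : Set α) = {u, v}) (hY : (↑Yz : Set α) = {s, t})
    (e : {x // x ∈ Xz} ≃ {y // y ∈ Yz}) :
    subdet P A Xz Yz e = A u s * A v t - A u t * A v s ∨
    subdet P A Xz Yz e = A u t * A v s - A u s * A v t := by
  haveI : DecidableEq α := Classical.decEq α
  have hu : u ∈ Xz := by rw [← Finset.mem_coe, hX]; exact Or.inl rfl
  have hv : v ∈ Xz := by rw [← Finset.mem_coe, hX]; exact Or.inr rfl
  let f : Fin 2 ≃ {x // x ∈ Xz} :=
    { toFun := ![⟨u, hu⟩, ⟨v, hv⟩]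
      invFun := fun z => if (z : α) = u then 0 else 1
      left_inv := by
        intro i
        fin_cases i
        · show (if ((⟨u, hu⟩ : {x // x ∈ Xz}) : α) = u then (0 : Fin 2) else 1) = 0
          rw [if_pos rfl]
        · show (if ((⟨v, hv⟩ : {x // x ∈ Xz}) : α) = u then (0 : Fin 2) else 1) = 1
          rw [if_neg huv.symm]
      right_inv := by
        intro z
        have hz : (z : α) = u ∨ (z : α) = v := by
          have hz2 : (z : α) ∈ (↑Xz : Set α) := Finset.mem_coe.mpr z.2
          rw [hX] at hz2; exact hz2
        rcases hz with h | h
        · show (![(⟨u, hu⟩ : {x // x ∈ Xz}), ⟨v, hv⟩] (if (z : α) = u then 0 else 1)) = z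
          rw [if_pos h]
          exact Subtype.ext h.symm
        · have hne : (z : α) ≠ u := by rw [h]; exact huv.symm
          show (![(⟨u, hu⟩ : {x // x ∈ Xz}), ⟨v, hv⟩] (if (z : α) = u then 0 else 1)) = z
          rw [if_neg hne]
          exact Subtype.ext h.symm }
  have hf0 : f 0 = ⟨u, hu⟩ := rfl
  have hf1 : f 1 = ⟨v, hv⟩ := rfl
  have hdet : subdet P A Xz Yz e =
      A u ((e ⟨u, hu⟩ : α)) * A v ((e ⟨v, hv⟩ : α)) -
      A u ((e ⟨v, hv⟩ : α)) * A v ((e ⟨u, hu⟩ : α)) := by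
    unfold subdet
    rw [← @Matrix.det_submatrix_equiv_self {x // x ∈ Xz} (Fin 2) _ _ (Classical.decEq _) _
      P.R _ f _]
    rw [Matrix.det_fin_two]
    simp only [Matrix.submatrix_apply, Matrix.of_apply, hf0, hf1]
  have hp : ((e ⟨u, hu⟩ : {z // z ∈ Yz}) : α) = s ∨ ((e ⟨u, hu⟩ : {z // z ∈ Yz}) : α) = t := by
    have hz2 : ((e ⟨u, hu⟩ : {z // z ∈ Yz}) : α) ∈ (↑Yz : Set α) :=
      Finset.mem_coe.mpr (e ⟨u, hu⟩).2
    rw [hY] at hz2; exact hz2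
  have hq : ((e ⟨v, hv⟩ : {z // z ∈ Yz}) : α) = s ∨ ((e ⟨v, hv⟩ : {z // z ∈ Yz}) : α) = t := by
    have hz2 : ((e ⟨v, hv⟩ : {z // z ∈ Yz}) : α) ∈ (↑Yz : Set α) :=
      Finset.mem_coe.mpr (e ⟨v, hv⟩).2
    rw [hY] at hz2; exact hz2
  have hpq : ((e ⟨u, hu⟩ : {z // z ∈ Yz}) : α) ≠ ((e ⟨v, hv⟩ : {z // z ∈ Yz}) : α) := by
    intro h
    have h2 : e ⟨u, hu⟩ = e ⟨v, hv⟩ := Subtype.ext h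
    have h3 := e.injective h2
    have h4 : u = v := congrArg Subtype.val h3
    exact huv h4
  rcases hp with hp | hp
  · have hq' : ((e ⟨v, hv⟩ : {z // z ∈ Yz}) : α) = t := by
      rcases hq with hq | hq
      · exact absurd (hp.trans hq.symm) hpq
      · exact hq
    left; rw [hdet, hp, hq']
  · have hq' : ((e ⟨v, hv⟩ : {z // z ∈ Yz}) : α) = s := by
      rcases hq with hq | hq
      · exact hq
      · exact absurd (hp.trans hq.symm) hpq
    right; rw [hdet, hp, hq']

private lemma indep_base_of_card {M : Matroid α} (hMfin : M.Finite) {B I : Set α}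
    (hB : M.IsBase B) (hI : M.Indep I) (hcard : I.encard = B.encard) : M.IsBase I := by
  haveI := hMfin
  obtain ⟨B', hB', hIB'⟩ := hI.exists_isBase_superset
  have hfin : B'.Finite := M.ground_finite.subset hB'.subset_ground
  have heq : I = B' :=
    hfin.eq_of_subset_of_encard_le' hIB'
      (le_of_eq ((hB'.encard_eq_encard_of_isBase hB).trans hcard.symm))
  rwa [heq]

private lemma base_insert_iff {M : Matroid α} (hMfin : M.Finite) {B : Set α} (hB : M.IsBase B)
    {i j : α} (hi : i ∈ B) (hjE : j ∈ M.E) (hjB : j ∉ B) :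
    M.IsBase (insert j (B \ {i})) ↔ j ∉ M.closure (B \ {i}) := by
  have hind : M.Indep (B \ {i}) := hB.indep.subset Set.diff_subset
  have hjmem : j ∉ B \ {i} := fun h => hjB h.1
  constructor
  · intro hbase
    exact ((hind.insert_indep_iff_of_notMem hjmem).mp hbase.indep).2
  · intro hcl
    exact indep_base_of_card hMfin hB
      ((hind.insert_indep_iff_of_notMem hjmem).mpr ⟨hjE, hcl⟩)
      (Set.encard_exchange hjB hi)

private lemma base_iff_entry (P : PartialField) {M : Matroid α} (hMfin : M.Finite)
    {B : Set α} (hB : M.IsBase B) (A : α → α → P.R) {i j c : α}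
    (hi : i ∈ B) (hj : j ∈ M.E \ B) (hc : c ∈ M.E \ B) (hjc : j ≠ c)
    (hR : Represents P B ((M.E \ B) \ {c}) A (del M {c})) :
    A i j ≠ 0 ↔ M.IsBase (insert j (B \ {i})) := by
  have hsym : symmDiff B ({i, j} : Set α) = insert j (B \ {i}) := by
    ext z
    rw [Set.mem_symmDiff]
    simp only [Set.mem_insert_iff, Set.mem_singleton_iff, Set.mem_diff]
    constructor
    · rintro (⟨hzB, hz⟩ | ⟨(rfl | rfl), hzB⟩)
      · exact Or.inr ⟨hzB, fun h => hz (Or.inl h)⟩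
      · exact absurd hi hzB
      · exact Or.inl rfl
    · rintro (rfl | ⟨hzB, hzi⟩)
      · exact Or.inr ⟨Or.inr rfl, hj.2⟩
      · exact Or.inl ⟨hzB, fun h => h.elim hzi (fun hzj => hj.2 (hzj ▸ hzB))⟩
  have h1 : B ∩ ({i, j} : Set α) = {i} := by
    ext z
    simp only [Set.mem_inter_iff, Set.mem_insert_iff, Set.mem_singleton_iff]
    constructor
    · rintro ⟨hzB, (rfl | rfl)⟩
      · rfl
      · exact absurd hzB hj.2
    · rintro rfl
      exact ⟨hi, Or.inl rfl⟩
  have h2 : ((M.E \ B) \ {c}) ∩ ({i, j} : Set α) = {j} := by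
    ext z
    simp only [Set.mem_inter_iff, Set.mem_insert_iff, Set.mem_singleton_iff, Set.mem_diff]
    constructor
    · rintro ⟨⟨⟨hzE, hzB⟩, hzc⟩, (rfl | rfl)⟩
      · exact absurd hi hzB
      · rfl
    · rintro rfl
      exact ⟨⟨hj, hjc⟩, Or.inr rfl⟩
  haveI U1 : Unique {z // z ∈ ({i} : Finset α)} := uniqueOfCoeSingleton (Finset.coe_singleton i)
  haveI U2 : Unique {z // z ∈ ({j} : Finset α)} := uniqueOfCoeSingleton (Finset.coe_singleton j)
  constructor
  · intro hne
    have hdel : (del M {c}).IsBase (insert j (B \ {i})) := by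
      rw [hR.2.2]
      refine Or.inr ⟨{i, j}, ?_, hsym.symm, ?_, ?_⟩
      · rintro z (rfl | rfl)
        · exact Or.inl hi
        · exact Or.inr ⟨hj, hjc⟩
      · rw [h1, h2, Set.encard_singleton, Set.encard_singleton]
      · refine ⟨{i}, {j}, Equiv.ofUnique _ _, ?_, ?_, ?_⟩
        · rw [Finset.coe_singleton, h1]
        · rw [Finset.coe_singleton, h2]
        · rwa [subdet_singleton P A (Finset.coe_singleton i) (Finset.coe_singleton j)]
    unfold del at hdel
    have hbasis : M.IsBasis (insert j (B \ {i})) (M.E \ {c}) :=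
      (Matroid.isBase_restrict_iff Set.diff_subset).mp hdel
    exact indep_base_of_card hMfin hB hbasis.indep (Set.encard_exchange hj.2 hi)
  · intro hbase
    have hdel : (del M {c}).IsBase (insert j (B \ {i})) := by
      unfold del
      rw [Matroid.isBase_restrict_iff Set.diff_subset]
      refine hbase.indep.isBasis_of_subset_of_subset_closure ?_ ?_
      · rintro z (rfl | ⟨hzB, -⟩)
        · exact ⟨hj.1, hjc⟩
        · exact ⟨hB.subset_ground hzB, fun h => hc.2 (h ▸ hzB)⟩
      · rw [hbase.closure_eq]
        exact Set.diff_subset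
    rw [hR.2.2] at hdel
    rcases hdel with heq | ⟨Z, hZsub, hZeq, hZcard, Xz, Yz, e, hXz, hYz, hne⟩
    · exact absurd (heq ▸ (Set.mem_insert j (B \ {i}))) hj.2
    · have hZ : Z = ({i, j} : Set α) := by
        have h' : symmDiff B Z = symmDiff B ({i, j} : Set α) := by
          rw [hsym]; exact hZeq.symm
        have h'' := congrArg (fun S => symmDiff B S) h'
        simpa [symmDiff_symmDiff_cancel_left] using h''
      subst hZ
      rw [h1] at hXz
      rw [h2] at hYz
      rwa [subdet_singleton P A hXz hYz] at hne

private lemma core_lemma (P : PartialField) {M : Matroid α} (hMfin : M.Finite)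
    {B : Set α} (hB : M.IsBase B)
    (A : α → α → P.R) (a b x y : α) (hab : a ≠ b)
    (haB : a ∈ M.E \ B) (hbB : b ∈ M.E \ B) (hx : x ∈ B) (hy : y ∈ B) (hxy : x ≠ y)
    (hxbc : A x b ∈ P.carrier) (hyac : A y a ∈ P.carrier)
    (hxa : A x a ≠ 0 ↔ M.IsBase (insert a (B \ {x})))
    (hxb : A x b ≠ 0 ↔ M.IsBase (insert b (B \ {x})))
    (hya : A y a ≠ 0 ↔ M.IsBase (insert a (B \ {y})))
    (hInc : Incriminates P M B A {a, b, x, y}) :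
    A x a ≠ 0 := by
  intro h0
  obtain ⟨hZE, Xz, Yz, e, hXz, hYz, hcase⟩ := hInc
  have hXs : (↑Xz : Set α) = ({x, y} : Set α) := by
    rw [hXz]; ext z
    simp only [Set.mem_inter_iff, Set.mem_insert_iff, Set.mem_singleton_iff]
    constructor
    · rintro ⟨hzB, (rfl | rfl | rfl | rfl)⟩
      · exact absurd hzB haB.2
      · exact absurd hzB hbB.2
      · exact Or.inl rfl
      · exact Or.inr rfl
    · rintro (rfl | rfl)
      · exact ⟨hx, Or.inr (Or.inr (Or.inl rfl))⟩
      · exact ⟨hy, Or.inr (Or.inr (Or.inr rfl))⟩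
  have hYs : (↑Yz : Set α) = ({a, b} : Set α) := by
    rw [hYz]; ext z
    simp only [Set.mem_inter_iff, Set.mem_insert_iff, Set.mem_singleton_iff, Set.mem_diff]
    constructor
    · rintro ⟨⟨hzE, hzB⟩, (rfl | rfl | rfl | rfl)⟩
      · exact Or.inl rfl
      · exact Or.inr rfl
      · exact absurd hx hzB
      · exact absurd hy hzB
    · rintro (rfl | rfl)
      · exact ⟨haB, Or.inl rfl⟩
      · exact ⟨hbB, Or.inr (Or.inl rfl)⟩
  have hdetv := subdet_pair P A hxy hab hXs hYs e
  rw [h0] at hdetv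
  set d := subdet P A Xz Yz e with hd
  set c := A x b * A y a with hc
  have hdv : d = -c ∨ d = c := by
    rcases hdetv with h | h
    · left; rw [h, hc]; ring
    · right; rw [h, hc]; ring
  have hcmem : c ∈ P.carrier := mul_mem_carrier hxbc hyac
  have hdmem : d ∈ P.carrier := by
    rcases hdv with h | h
    · rw [h]; exact neg_mem_carrier hcmem
    · rw [h]; exact hcmem
  have hsymm : symmDiff B ({a, b, x, y} : Set α) = insert a (insert b (B \ ({x, y} : Set α))) := by
    ext z
    rw [Set.mem_symmDiff]
    simp only [Set.mem_insert_iff, Set.mem_singleton_iff, Set.mem_diff]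
    constructor
    · rintro (⟨hzB, hz⟩ | ⟨(rfl | rfl | rfl | rfl), hzB⟩)
      · exact Or.inr (Or.inr ⟨hzB, fun h =>
          hz (h.elim (fun h1 => Or.inr (Or.inr (Or.inl h1)))
              (fun h1 => Or.inr (Or.inr (Or.inr h1))))⟩)
      · exact Or.inl rfl
      · exact Or.inr (Or.inl rfl)
      · exact absurd hx hzB
      · exact absurd hy hzB
    · rintro (rfl | rfl | ⟨hzB, hz⟩)
      · exact Or.inr ⟨Or.inl rfl, haB.2⟩
      · exact Or.inr ⟨Or.inr (Or.inl rfl), hbB.2⟩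
      · refine Or.inl ⟨hzB, ?_⟩
        rintro (rfl | rfl | rfl | rfl)
        · exact haB.2 hzB
        · exact hbB.2 hzB
        · exact hz (Or.inl rfl)
        · exact hz (Or.inr rfl)
  rcases hcase with hnc | ⟨hd0, hbase⟩ | ⟨hdne, hdep⟩
  · exact hnc hdmem
  · -- determinant zero, B △ Z a base
    rw [hsymm] at hbase
    have hc0 : A x b = 0 ∨ A y a = 0 := by
      rcases subsingleton_or_nontrivial P.R with hs | hnt
      · exact Or.inl (Subsingleton.elim _ _)
      · by_contra hcon
        push_neg at hcon
        obtain ⟨h1, h2⟩ := hcon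
        rcases hxbc with h | ⟨u, hu, hueq⟩
        · exact h1 h
        rcases hyac with h | ⟨v, hv, hveq⟩
        · exact h2 h
        have hcne : c ≠ 0 := by
          rw [hc, ← hueq, ← hveq, ← Units.val_mul]
          exact Units.ne_zero _
        rcases hdv with h | h
        · rw [h] at hd0; exact hcne (neg_eq_zero.mp hd0)
        · exact hcne (h.symm.trans hd0)
    have hxnot : x ∉ insert a (insert b (B \ ({x, y} : Set α))) := by
      rintro (rfl | rfl | ⟨-, h⟩)
      · exact haB.2 hx
      · exact hbB.2 hx
      · exact h (Or.inl rfl)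
    rcases hc0 with hxb0 | hya0
    · obtain ⟨f, hf, hfbase⟩ := hB.exchange hbase ⟨hx, hxnot⟩
      have hf' : f = a ∨ f = b := by
        obtain ⟨hfBZ, hfB⟩ := hf
        rcases hfBZ with rfl | rfl | ⟨hfB', -⟩
        · exact Or.inl rfl
        · exact Or.inr rfl
        · exact absurd hfB' hfB
      rcases hf' with rfl | rfl
      · exact (hxa.mpr hfbase) h0
      · exact (hxb.mpr hfbase) hxb0
    · have hBd := hB.compl_isBase_dual
      have hBZd := hbase.compl_isBase_dual
      have haMem : a ∈ (M.E \ B) \ (M.E \ (insert a (insert b (B \ ({x, y} : Set α))))) :=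
        ⟨haB, fun h => h.2 (Or.inl rfl)⟩
      obtain ⟨g, hg, hgbase⟩ := hBd.exchange hBZd haMem
      have hgB : g ∈ B := by
        obtain ⟨⟨hgE, -⟩, hg2⟩ := hg
        by_contra hgB'
        exact hg2 ⟨hgE, hgB'⟩
      have hgxy : g = x ∨ g = y := by
        obtain ⟨⟨hgE, hgBZ⟩, -⟩ := hg
        by_contra hcon
        push_neg at hcon
        exact hgBZ (Or.inr (Or.inr ⟨hgB, fun h => h.elim hcon.1 hcon.2⟩))
      have hsub : insert g ((M.E \ B) \ {a}) ⊆ M.E := by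
        rintro z (rfl | ⟨⟨hzE, -⟩, -⟩)
        · exact hB.subset_ground hgB
        · exact hzE
      have hMbase : M.IsBase (M.E \ insert g ((M.E \ B) \ {a})) :=
        (Matroid.dual_isBase_iff hsub).mp hgbase
      have hcompl : M.E \ insert g ((M.E \ B) \ {a}) = insert a (B \ {g}) := by
        ext z
        simp only [Set.mem_diff, Set.mem_insert_iff, Set.mem_singleton_iff]
        constructor
        · rintro ⟨hzE, hz⟩
          by_cases hzB : z ∈ B
          · exact Or.inr ⟨hzB, fun hzg => hz (Or.inl hzg)⟩
          · by_cases hza : z = a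
            · exact Or.inl hza
            · exact absurd (Or.inr ⟨⟨hzE, hzB⟩, hza⟩) hz
        · rintro (rfl | ⟨hzB, hzg⟩)
          · refine ⟨haB.1, ?_⟩
            rintro (rfl | ⟨-, hne⟩)
            · exact haB.2 hgB
            · exact hne rfl
          · refine ⟨hB.subset_ground hzB, ?_⟩
            rintro (rfl | ⟨⟨-, hzB'⟩, -⟩)
            · exact hzg rfl
            · exact hzB' hzB
      rw [hcompl] at hMbase
      rcases hgxy with rfl | rfl
      · exact (hxa.mpr hMbase) h0
      · exact (hya.mpr hMbase) hya0
  · -- determinant nonzero, B △ Z dependent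
    rw [hsymm] at hdep
    have hcne : c ≠ 0 := by
      intro h
      rcases hdv with h' | h'
      · exact hdne (by rw [h', h, neg_zero])
      · exact hdne (h'.trans h)
    have hxb0 : A x b ≠ 0 := fun h => hcne (by rw [hc, h, zero_mul])
    have hya0 : A y a ≠ 0 := fun h => hcne (by rw [hc, h, mul_zero])
    have hclx : a ∈ M.closure (B \ {x}) := by
      by_contra hcl
      exact (hxa.mpr ((base_insert_iff hMfin hB hx haB.1 haB.2).mpr hcl)) h0
    have hclb : b ∉ M.closure (B \ {x}) :=
      (base_insert_iff hMfin hB hx hbB.1 hbB.2).mp (hxb.mp hxb0)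
    have hcla : a ∉ M.closure (B \ {y}) :=
      (base_insert_iff hMfin hB hy haB.1 haB.2).mp (hya.mp hya0)
    have hBxy_sub : B \ ({x, y} : Set α) ⊆ B \ {y} := by
      rintro z ⟨hzB, hz⟩
      exact ⟨hzB, fun h => hz (Or.inr h)⟩
    have hind : M.Indep (insert a (B \ ({x, y} : Set α))) := by
      have hindB : M.Indep (B \ ({x, y} : Set α)) := hB.indep.subset Set.diff_subset
      rw [hindB.insert_indep_iff_of_notMem (fun h => haB.2 h.1)]
      exact ⟨haB.1, fun h => hcla (M.closure_subset_closure hBxy_sub h)⟩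
    have hdep' : ¬ M.Indep (insert b (insert a (B \ ({x, y} : Set α)))) := by
      have h := hdep.not_indep
      rwa [Set.insert_comm] at h
    have hbmem : b ∉ insert a (B \ ({x, y} : Set α)) := by
      rintro (rfl | ⟨hzB, -⟩)
      · exact hab rfl
      · exact hbB.2 hzB
    have hbcl : b ∈ M.closure (insert a (B \ ({x, y} : Set α))) := by
      by_contra hcl
      exact hdep' ((hind.insert_indep_iff_of_notMem hbmem).mpr ⟨hbB.1, hcl⟩)
    have hsub2 : insert a (B \ ({x, y} : Set α)) ⊆ M.closure (B \ {x}) := by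
      rintro z (rfl | ⟨hzB, hz⟩)
      · exact hclx
      · exact M.subset_closure (B \ {x}) (Set.diff_subset.trans hB.subset_ground)
          ⟨hzB, fun h => hz (Or.inl h)⟩
    have hsub3 : M.closure (insert a (B \ ({x, y} : Set α))) ⊆ M.closure (B \ {x}) := by
      have h1 := M.closure_subset_closure hsub2
      rwa [M.closure_closure] at h1
    exact hclb (hsub3 hbcl)

end Statement5Aux

/-- Lemma 2.21: the bad submatrix has no zero entries. -/
theorem statement_5 (P : PartialField) (M : Matroid α) (hMfin : M.Finite)
    (B : Set α) (hB : M.IsBase B)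
    (A : α → α → P.R) (a b x y : α) (hab : a ≠ b)
    (haB : a ∈ M.E \ B) (hbB : b ∈ M.E \ B) (hx : x ∈ B) (hy : y ∈ B) (hxy : x ≠ y)
    (hPa : IsPMatrix P B ((M.E \ B) \ {a}) A)
    (hPb : IsPMatrix P B ((M.E \ B) \ {b}) A)
    (hRa : Represents P B ((M.E \ B) \ {a}) A (del M {a}))
    (hRb : Represents P B ((M.E \ B) \ {b}) A (del M {b}))
    (hInc : Incriminates P M B A {a, b, x, y}) :
    ∀ i ∈ ({x, y} : Set α), ∀ j ∈ ({a, b} : Set α), A i j ≠ 0 := by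
  have Exa := base_iff_entry P hMfin hB A hx haB hbB hab hRb
  have Exb := base_iff_entry P hMfin hB A hx hbB haB hab.symm hRa
  have Eya := base_iff_entry P hMfin hB A hy haB hbB hab hRb
  have Eyb := base_iff_entry P hMfin hB A hy hbB haB hab.symm hRa
  have Cxa : A x a ∈ P.carrier := entry_mem_carrier hPb hx ⟨haB, hab⟩
  have Cxb : A x b ∈ P.carrier := entry_mem_carrier hPa hx ⟨hbB, hab.symm⟩
  have Cya : A y a ∈ P.carrier := entry_mem_carrier hPb hy ⟨haB, hab⟩
  have Cyb : A y b ∈ P.carrier := entry_mem_carrier hPa hy ⟨hbB, hab.symm⟩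
  have hset1 : ({b, a, x, y} : Set α) = {a, b, x, y} := Set.insert_comm b a {x, y}
  have hset2 : ({a, b, y, x} : Set α) = {a, b, x, y} := by rw [Set.pair_comm y x]
  have hset3 : ({b, a, y, x} : Set α) = {a, b, x, y} := by
    rw [Set.pair_comm y x, Set.insert_comm b a]
  have h1 : A x a ≠ 0 :=
    core_lemma P hMfin hB A a b x y hab haB hbB hx hy hxy Cxb Cya Exa Exb Eya hInc
  have h2 : A x b ≠ 0 :=
    core_lemma P hMfin hB A b a x y hab.symm hbB haB hx hy hxy Cxa Cyb Exb Exa Eyb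
      (by rw [hset1]; exact hInc)
  have h3 : A y a ≠ 0 :=
    core_lemma P hMfin hB A a b y x hab haB hbB hy hx hxy.symm Cyb Cxa Eya Eyb Exa
      (by rw [hset2]; exact hInc)
  have h4 : A y b ≠ 0 :=
    core_lemma P hMfin hB A b a y x hab.symm hbB haB hy hx hxy.symm Cya Cxb Eyb Eya Exb
      (by rw [hset3]; exact hInc)
  rintro i (rfl | rfl) j (rfl | rfl)
  exacts [h1, h2, h3, h4]

end ExcludedMinorsFragile
end

section
/- Assume the Setup, and additionally suppose that B is a robust basis for M. If M∖{a,b} has no (N,B)-robust elements outside of {x,y}, then M∖{a,b} is N-fragile. -/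
open Set Matroid

namespace ExcludedMinorsFragile

variable {α : Type*}

variable {α : Type*}

/-! ### Auxiliary lemmas -/

section Aux

lemma del_ground' (M : Matroid α) (D : Set α) : (del M D).E = M.E \ D := rfl

lemma con_ground' (M : Matroid α) (C : Set α) : (con M C).E = M.E \ C := rfl

lemma del_del (M : Matroid α) (D₁ D₂ : Set α) :
    del (del M D₁) D₂ = del M (D₁ ∪ D₂) := by
  unfold del
  rw [restrict_ground_eq, restrict_restrict_eq M diff_subset, diff_diff]

lemma con_eq_dual_del (M : Matroid α) (C : Set α) : con M C = (del M✶ C)✶ := by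
  unfold con del
  rw [dual_ground]

lemma base_del_of_base {M : Matroid α} {S D : Set α} (hS : M.IsBase S) (hdj : Disjoint S D) :
    (del M D).IsBase S := by
  rw [isBase_iff_maximal_indep]
  refine ⟨restrict_indep_iff.mpr ⟨hS.indep, subset_diff.mpr ⟨hS.subset_ground, hdj⟩⟩,
    fun J hJ hSJ => ?_⟩
  exact (hS.eq_of_subset_indep (restrict_indep_iff.mp hJ).1 hSJ).symm.le

lemma indep_encard_le_base {M : Matroid α} {I Bq : Set α} (hI : M.Indep I) (hB : M.IsBase Bq) :
    I.encard ≤ Bq.encard := by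
  obtain ⟨B', hB', hIB'⟩ := hI.exists_isBase_superset
  exact (encard_mono hIB').trans (hB'.encard_eq_encard_of_isBase hB).le

lemma base_of_indep_encard {M : Matroid α} {I Bq : Set α} (hI : M.Indep I) (hB : M.IsBase Bq)
    (hfin : Bq.Finite) (hcard : Bq.encard ≤ I.encard) : M.IsBase I := by
  obtain ⟨B', hB', hIB'⟩ := hI.exists_isBase_superset
  have hcc : B'.encard = Bq.encard := hB'.encard_eq_encard_of_isBase hB
  have hB'fin : B'.Finite := by
    rw [← Set.encard_ne_top_iff] at hfin ⊢
    rwa [hcc]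
  have : I = B' := (hB'fin.subset hIB').eq_of_subset_of_encard_le hIB' (hcc.le.trans hcard)
  rwa [this]

lemma del_base_iff_of_disjoint_base {M : Matroid α} {B₀ D S : Set α}
    (hB₀ : M.IsBase B₀) (hdj : Disjoint B₀ D) (hfin : M.E.Finite) :
    (del M D).IsBase S ↔ M.IsBase S ∧ Disjoint S D := by
  constructor
  · intro hSb
    have hSi : M.Indep S := (restrict_indep_iff.mp hSb.indep).1
    have hSD : S ⊆ M.E \ D := (restrict_indep_iff.mp hSb.indep).2
    have hB₀d : (del M D).IsBase B₀ := base_del_of_base hB₀ hdj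
    have hcard : B₀.encard = S.encard := hB₀d.encard_eq_encard_of_isBase hSb
    exact ⟨base_of_indep_encard hSi hB₀ (hfin.subset hB₀.subset_ground) hcard.le,
      (subset_diff.mp hSD).2⟩
  · rintro ⟨h1, h2⟩
    exact base_del_of_base h1 h2

lemma con_base_iff {M : Matroid α} {B₀ C S : Set α} (hB₀ : M.IsBase B₀) (hC : C ⊆ B₀)
    (hfin : M.E.Finite) :
    (con M C).IsBase S ↔ S ⊆ M.E \ C ∧ M.IsBase (S ∪ C) := by
  have hCE : C ⊆ M.E := hC.trans hB₀.subset_ground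
  have hgr : (del M✶ C).E = M.E \ C := by rw [del_ground', dual_ground]
  have hdb : M✶.IsBase (M.E \ B₀) := hB₀.compl_isBase_dual
  have hdjd : Disjoint (M.E \ B₀) C := disjoint_of_subset_right hC disjoint_sdiff_left
  have hfind : M✶.E.Finite := by rwa [dual_ground]
  rw [con_eq_dual_del, dual_isBase_iff', hgr,
    del_base_iff_of_disjoint_base hdb hdjd hfind]
  constructor
  · rintro ⟨⟨h1, -⟩, h2⟩
    rw [dual_isBase_iff (M := M) (show (M.E \ C) \ S ⊆ M.E from diff_subset.trans diff_subset)] at h1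
    have hset : M.E \ ((M.E \ C) \ S) = S ∪ C := by
      ext z
      simp only [Set.mem_diff, Set.mem_union, not_and, not_not]
      constructor
      · rintro ⟨hzE, hz⟩
        by_cases hzC : z ∈ C
        · exact Or.inr hzC
        · exact Or.inl (hz ⟨hzE, hzC⟩)
      · rintro (hzS | hzC)
        · exact ⟨(h2 hzS).1, fun _ => hzS⟩
        · exact ⟨hCE hzC, fun h => absurd hzC h.2⟩
    rw [hset] at h1
    exact ⟨h2, h1⟩
  · rintro ⟨h2, h1⟩
    have hSE : S ⊆ M.E := fun z hz => (h2 hz).1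
    refine ⟨⟨?_, disjoint_of_subset_left diff_subset disjoint_sdiff_left⟩, h2⟩
    rw [dual_isBase_iff (diff_subset.trans diff_subset)]
    have hset : M.E \ ((M.E \ C) \ S) = S ∪ C := by
      ext z
      simp only [Set.mem_diff, Set.mem_union, not_and, not_not]
      constructor
      · rintro ⟨hzE, hz⟩
        by_cases hzC : z ∈ C
        · exact Or.inr hzC
        · exact Or.inl (hz ⟨hzE, hzC⟩)
      · rintro (hzS | hzC)
        · exact ⟨hSE hzS, fun _ => hzS⟩
        · exact ⟨hCE hzC, fun h => absurd hzC h.2⟩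
    rwa [hset]

lemma con_del_comm' {M : Matroid α} {B₀ C D : Set α} (hB₀ : M.IsBase B₀) (hC : C ⊆ B₀)
    (hD : Disjoint B₀ D) (hfin : M.E.Finite) :
    del (con M C) D = con (del M D) C := by
  have hCE : C ⊆ M.E := hC.trans hB₀.subset_ground
  have hCD : Disjoint C D := disjoint_of_subset_left hC hD
  have hgr : (del (con M C) D).E = (con (del M D) C).E := by
    rw [del_ground', con_ground', con_ground', del_ground', diff_diff_comm]
  have hconB : (con M C).IsBase (B₀ \ C) := by
    rw [con_base_iff hB₀ hC hfin]
    refine ⟨diff_subset_diff_left hB₀.subset_ground, ?_⟩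
    rw [diff_union_of_subset hC]
    exact hB₀
  have hdelB : (del M D).IsBase B₀ := base_del_of_base hB₀ hD
  have hfinc : (con M C).E.Finite := by rw [con_ground']; exact hfin.subset diff_subset
  have hfind : (del M D).E.Finite := by rw [del_ground']; exact hfin.subset diff_subset
  apply Matroid.ext_isBase hgr
  intro S hS
  rw [del_ground', con_ground'] at hS
  have hSMC : S ⊆ M.E \ C := hS.trans diff_subset
  have hSD : Disjoint S D := by
    rw [disjoint_left]
    intro z hz hzD
    exact ((hS hz).2 hzD)
  rw [del_base_iff_of_disjoint_base hconB (disjoint_of_subset_left diff_subset hD) hfinc,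
    con_base_iff hB₀ hC hfin,
    con_base_iff hdelB hC hfind,
    del_base_iff_of_disjoint_base hB₀ hD hfin]
  constructor
  · rintro ⟨⟨h1, h2⟩, -⟩
    refine ⟨?_, h2, disjoint_union_left.mpr ⟨hSD, hCD⟩⟩
    rw [del_ground', diff_diff_comm]
    exact hS
  · rintro ⟨h1, h2, -⟩
    exact ⟨⟨hSMC, h2⟩, hSD⟩

lemma le_eRk' {M : Matroid α} {I X : Set α} (hI : M.Indep I) (hIX : I ⊆ X) :
    I.encard ≤ eRk M X :=
  le_iSup₂ (f := fun I (_ : I ∈ {I : Set α | M.Indep I ∧ I ⊆ X}) => I.encard) I ⟨hI, hIX⟩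

lemma eRk_le' {M : Matroid α} {X : Set α} {c : ℕ∞}
    (h : ∀ I, M.Indep I → I ⊆ X → I.encard ≤ c) : eRk M X ≤ c :=
  iSup₂_le fun I hI => h I hI.1 hI.2

lemma exists_base_not_mem {M : Matroid α} (h3 : ThreeConnected M) (hfin : M.E.Finite)
    (hcard : 4 ≤ M.E.encard) {e : α} (he : e ∈ M.E) : ∃ B₃, M.IsBase B₃ ∧ e ∉ B₃ := by
  by_contra hco
  push_neg at hco
  obtain ⟨B₀, hB₀⟩ := M.exists_isBase
  apply h3 1 {e} (M.E \ {e}) (by norm_num)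
  have heB₀ : e ∈ B₀ := hco B₀ hB₀
  refine ⟨Set.disjoint_sdiff_right, union_diff_cancel (by simpa using he), ?_, ?_, ?_⟩
  · simp
  · rw [Nat.cast_one, Set.one_le_encard_iff_nonempty]
    by_contra hne
    rw [Set.not_nonempty_iff_eq_empty, Set.diff_eq_empty] at hne
    have := (encard_mono hne).trans_eq (encard_singleton e)
    exact absurd (hcard.trans this) (by norm_num)
  · have h1 : eRk M {e} ≤ 1 := eRk_le' fun I _ hIX =>
      (encard_mono hIX).trans_eq (encard_singleton e)
    have h2 : eRk M (M.E \ {e}) ≤ (B₀ \ {e}).encard := by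
      refine eRk_le' fun I hI hIX => ?_
      obtain ⟨B₆, hB₆, hIB₆⟩ := hI.exists_isBase_superset
      have heB₆ : e ∈ B₆ := hco B₆ hB₆
      have hIB₆' : I ⊆ B₆ \ {e} := by
        intro z hz
        exact ⟨hIB₆ hz, fun hez => (hIX hz).2 hez⟩
      refine (encard_mono hIB₆').trans ?_
      have h₆ : (B₆ \ {e}).encard + 1 = B₆.encard := Set.encard_diff_singleton_add_one heB₆
      have h₀ : (B₀ \ {e}).encard + 1 = B₀.encard := Set.encard_diff_singleton_add_one heB₀
      have hbb : B₆.encard = B₀.encard := hB₆.encard_eq_encard_of_isBase hB₀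
      have : (B₆ \ {e}).encard + 1 = (B₀ \ {e}).encard + 1 := by rw [h₆, h₀, hbb]
      exact (WithTop.add_right_cancel WithTop.one_ne_top this).le
    have h3' : eRk M M.E = B₀.encard := le_antisymm
      (eRk_le' fun I hI _ => indep_encard_le_base hI hB₀)
      (le_eRk' hB₀.indep hB₀.subset_ground)
    rw [h3', Nat.cast_one]
    calc eRk M {e} + eRk M (M.E \ {e}) + 1 ≤ 1 + (B₀ \ {e}).encard + 1 :=
          add_le_add (add_le_add h1 h2) le_rfl
    _ = B₀.encard + 1 := by
        rw [add_comm 1 ((B₀ \ {e}).encard), Set.encard_diff_singleton_add_one heB₀]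

lemma MatIso.ground_encard {M N : Matroid α} (h : MatIso M N) : M.E.encard = N.E.encard := by
  obtain ⟨f, hf, -⟩ := h
  rw [← hf.image_eq, hf.injOn.encard_image]

lemma MatIso.exists_base_encard {M N : Matroid α} (h : MatIso M N) {S : Set α}
    (hS : M.IsBase S) : ∃ T, N.IsBase T ∧ T.encard = S.encard := by
  obtain ⟨f, hf, hind⟩ := h
  have hSE : S ⊆ M.E := hS.subset_ground
  refine ⟨f '' S, ?_, (hf.injOn.mono hSE).encard_image⟩
  rw [isBase_iff_maximal_indep]
  have hfS : N.Indep (f '' S) := (hind S hSE).mp hS.indep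
  refine ⟨hfS, fun J hJ hSJ => ?_⟩
  have hJE : J ⊆ N.E := hJ.subset_ground
  set J₀ := M.E ∩ f ⁻¹' J with hJ₀def
  have him : f '' J₀ = J := by
    apply subset_antisymm
    · rintro _ ⟨z, ⟨hz1, hz2⟩, rfl⟩; exact hz2
    · intro j hj
      obtain ⟨m, hm, rfl⟩ := hf.surjOn (hJE hj)
      exact ⟨m, ⟨hm, hj⟩, rfl⟩
  have hJ₀i : M.Indep J₀ := by
    rw [hind J₀ inter_subset_left, him]
    exact hJ
  have hSJ₀ : S ⊆ J₀ := fun s hs => ⟨hSE hs, hSJ ⟨s, hs, rfl⟩⟩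
  have hSeq : S = J₀ := hS.eq_of_subset_indep hJ₀i hSJ₀
  rw [← him, ← hSeq]

lemma base_del_encard {Q : Matroid α} {Bq Bd D : Set α} (hQ : Q.IsBase Bq)
    (hd : (del Q D).IsBase Bd) : Bq.encard ≤ Bd.encard + D.encard := by
  have h1 : (del Q D).Indep (Bq \ D) := restrict_indep_iff.mpr
    ⟨hQ.indep.subset diff_subset, diff_subset_diff_left hQ.subset_ground⟩
  have h2 : (Bq \ D).encard ≤ Bd.encard := indep_encard_le_base h1 hd
  calc Bq.encard = (Bq \ D).encard + (Bq ∩ D).encard :=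
        (Set.encard_diff_add_encard_inter _ _).symm
  _ ≤ Bd.encard + D.encard := add_le_add h2 (encard_mono inter_subset_right)

lemma base_con_encard {Q : Matroid α} {Bq Bc C : Set α} (hfin : Q.E.Finite) (hQ : Q.IsBase Bq)
    (hc : (con Q C).IsBase Bc) (hCE : C ⊆ Q.E) : Bq.encard ≤ Bc.encard + C.encard := by
  rw [con_eq_dual_del, dual_isBase_iff'] at hc
  obtain ⟨hc1, hc2⟩ := hc
  have hgr : (del Q✶ C).E = Q.E \ C := by rw [del_ground', dual_ground]
  rw [hgr] at hc1 hc2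
  have hqd : Q✶.IsBase (Q.E \ Bq) := hQ.compl_isBase_dual
  have hTindep : Q✶.Indep ((Q.E \ C) \ Bc) := (restrict_indep_iff.mp hc1.indep).1
  have hT_le : ((Q.E \ C) \ Bc).encard ≤ (Q.E \ Bq).encard := indep_encard_le_base hTindep hqd
  have e1 : ((Q.E \ C) \ Bc).encard + Bc.encard = (Q.E \ C).encard :=
    Set.encard_diff_add_encard_of_subset hc2
  have e2 : (Q.E \ C).encard + C.encard = Q.E.encard :=
    Set.encard_diff_add_encard_of_subset hCE
  have e3 : (Q.E \ Bq).encard + Bq.encard = Q.E.encard :=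
    Set.encard_diff_add_encard_of_subset hQ.subset_ground
  have hfT : ((Q.E \ C) \ Bc).Finite := hfin.subset (diff_subset.trans diff_subset)
  have hfBc : Bc.Finite := hfin.subset (hc2.trans diff_subset)
  have hfC : C.Finite := hfin.subset hCE
  have hfBq : Bq.Finite := hfin.subset hQ.subset_ground
  have hfQC : (Q.E \ C).Finite := hfin.subset diff_subset
  have hfQB : (Q.E \ Bq).Finite := hfin.subset diff_subset
  rw [← hfT.cast_ncard_eq, ← hfBc.cast_ncard_eq, ← hfC.cast_ncard_eq, ← hfBq.cast_ncard_eq,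
    ← hfQC.cast_ncard_eq, ← hfQB.cast_ncard_eq, ← hfin.cast_ncard_eq] at *
  have i1 : ((Q.E \ C) \ Bc).ncard ≤ (Q.E \ Bq).ncard := by exact_mod_cast hT_le
  have i2 : ((Q.E \ C) \ Bc).ncard + Bc.ncard = (Q.E \ C).ncard := by exact_mod_cast e1
  have i3 : (Q.E \ C).ncard + C.ncard = Q.E.ncard := by exact_mod_cast e2
  have i4 : (Q.E \ Bq).ncard + Bq.ncard = Q.E.ncard := by exact_mod_cast e3
  have : Bq.ncard ≤ Bc.ncard + C.ncard := by omega
  exact_mod_cast this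

end Aux

section Main

lemma nonzeroSubdet_congr {P : PartialField} {A : α → α → P.R} {X Y X' Y' Z : Set α}
    (h1 : X ∩ Z = X' ∩ Z) (h2 : Y ∩ Z = Y' ∩ Z) :
    NonzeroSubdet P A X Y Z ↔ NonzeroSubdet P A X' Y' Z := by
  unfold NonzeroSubdet
  rw [h1, h2]

lemma represents_minor_eq {P : PartialField} {X Y X' Y' : Set α} {A : α → α → P.R}
    {Q N' : Matroid α} (hfin : Q.E.Finite)
    (hQ : Represents P X Y A Q) (hN : Represents P X' Y' A N')
    (hX' : X' ⊆ X) (hY' : Y' ⊆ Y) :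
    N' = del (con Q (X \ X')) (Y \ Y') := by
  obtain ⟨hdXY, hE, hbase⟩ := hQ
  obtain ⟨hdX'Y', hNE, hbase'⟩ := hN
  have hXE : X ⊆ Q.E := hE.symm ▸ (subset_union_left : X ⊆ X ∪ Y)
  have hYE : Y ⊆ Q.E := hE.symm ▸ (subset_union_right : Y ⊆ X ∪ Y)
  have hXbase : Q.IsBase X := (hbase X).mpr (Or.inl rfl)
  have hX'QE : X' ⊆ Q.E := hX'.trans hXE
  have hXYf : ∀ z, z ∈ X → z ∈ Y → False := fun z h1 h2 => (Set.disjoint_left.mp hdXY h1) h2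
  have hX'Yf : ∀ z, z ∈ X' → z ∈ Y → False := fun z h1 => hXYf z (hX' h1)
  have hXY'f : ∀ z, z ∈ X → z ∈ Y' → False := fun z h1 h2 => hXYf z h1 (hY' h2)
  have hconB : ∀ S : Set α,
      (con Q (X \ X')).IsBase S ↔ S ⊆ Q.E \ (X \ X') ∧ Q.IsBase (S ∪ (X \ X')) :=
    fun S => con_base_iff hXbase diff_subset hfin
  have hX'cb : (con Q (X \ X')).IsBase X' := by
    rw [hconB]
    refine ⟨fun z hz => ⟨hX'QE hz, fun h => h.2 hz⟩, ?_⟩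
    rw [union_diff_cancel hX']
    exact hXbase
  have hdjX'D : Disjoint X' (Y \ Y') := by
    rw [disjoint_left]
    intro z hz hzD
    exact hX'Yf z hz hzD.1
  have hfinc : (con Q (X \ X')).E.Finite := by
    rw [con_ground']; exact hfin.subset diff_subset
  have hground : (del (con Q (X \ X')) (Y \ Y')).E = X' ∪ Y' := by
    rw [del_ground', con_ground', hE]
    ext z
    simp only [Set.mem_diff, Set.mem_union, not_and, not_not]
    constructor
    · rintro ⟨⟨h1 | h1, h2⟩, h3⟩
      · exact Or.inl (h2 h1)
      · exact Or.inr (h3 h1)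
    · rintro (h | h)
      · exact ⟨⟨Or.inl (hX' h), fun _ => h⟩, fun hzY => (hX'Yf z h hzY).elim⟩
      · exact ⟨⟨Or.inr (hY' h), fun hzX => (hXY'f z hzX h).elim⟩, fun _ => h⟩
  refine Matroid.ext_isBase (hNE.trans hground.symm) ?_
  intro S hS0
  rw [hNE] at hS0
  have hSf1 : ∀ z ∈ S, z ∈ X → z ∈ X' := by
    intro z hz hzX
    rcases hS0 hz with h | h
    · exact h
    · exact (hXY'f z hzX h).elim
  have hSf2 : ∀ z ∈ S, z ∉ X → z ∈ Y' := by
    intro z hz hzX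
    rcases hS0 hz with h | h
    · exact (hzX (hX' h)).elim
    · exact h
  have hrhs : (del (con Q (X \ X')) (Y \ Y')).IsBase S ↔ Q.IsBase (S ∪ (X \ X')) := by
    rw [del_base_iff_of_disjoint_base hX'cb hdjX'D hfinc, hconB]
    constructor
    · rintro ⟨⟨-, h⟩, -⟩; exact h
    · intro h
      refine ⟨⟨fun z hz => ?_, h⟩, ?_⟩
      · refine ⟨?_, fun hc => hc.2 (hSf1 z hz hc.1)⟩
        rcases hS0 hz with h' | h'
        · exact hX'QE h'
        · exact hYE (hY' h')
      · rw [disjoint_left]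
        intro z hz hzD
        by_cases hzX : z ∈ X
        · exact hXYf z hzX hzD.1
        · exact hzD.2 (hSf2 z hz hzX)
  rw [hbase' S, hrhs, hbase (S ∪ (X \ X'))]
  constructor
  · rintro (h | ⟨Zn, hZnsub, hZnsd, hZnenc, hZnnz⟩)
    · left
      rw [h, union_diff_cancel hX']
    · right
      have hmem' : ∀ z, z ∈ S ↔ ((z ∈ X' ∧ z ∉ Zn) ∨ (z ∈ Zn ∧ z ∉ X')) := by
        intro z
        rw [hZnsd, Set.mem_symmDiff]
      have hXZn : X ∩ Zn = X' ∩ Zn := by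
        ext z
        constructor
        · rintro ⟨hzX, hzZn⟩
          rcases hZnsub hzZn with h' | h'
          · exact ⟨h', hzZn⟩
          · exact (hXY'f z hzX h').elim
        · rintro ⟨h', hzZn⟩
          exact ⟨hX' h', hzZn⟩
      have hYZn : Y ∩ Zn = Y' ∩ Zn := by
        ext z
        constructor
        · rintro ⟨hzY, hzZn⟩
          rcases hZnsub hzZn with h' | h'
          · exact (hX'Yf z h' hzY).elim
          · exact ⟨h', hzZn⟩
        · rintro ⟨h', hzZn⟩
          exact ⟨hY' h', hzZn⟩
      refine ⟨Zn, ?_, ?_, ?_, ?_⟩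
      · intro z hz
        rcases hZnsub hz with h' | h'
        · exact Or.inl (hX' h')
        · exact Or.inr (hY' h')
      · ext z
        rw [Set.mem_union, Set.mem_symmDiff]
        constructor
        · rintro (hz | ⟨hzX, hzX'⟩)
          · rcases (hmem' z).mp hz with ⟨h1, h2⟩ | ⟨h1, h2⟩
            · exact Or.inl ⟨hX' h1, h2⟩
            · have hzY' : z ∈ Y' := by
                rcases hZnsub h1 with h' | h'
                · exact (h2 h').elim
                · exact h'
              exact Or.inr ⟨h1, fun h => hXY'f z h hzY'⟩
          · refine Or.inl ⟨hzX, fun hzZn => ?_⟩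
            have hx' : z ∈ X' ∩ Zn := by rw [← hXZn]; exact ⟨hzX, hzZn⟩
            exact hzX' hx'.1
        · rintro (⟨hzX, hzZn⟩ | ⟨hzZn, hzX⟩)
          · by_cases hzX' : z ∈ X'
            · exact Or.inl ((hmem' z).mpr (Or.inl ⟨hzX', hzZn⟩))
            · exact Or.inr ⟨hzX, hzX'⟩
          · have hzX'n : z ∉ X' := fun h => hzX (hX' h)
            exact Or.inl ((hmem' z).mpr (Or.inr ⟨hzZn, hzX'n⟩))
      · rw [hXZn, hYZn]; exact hZnenc
      · exact (nonzeroSubdet_congr hXZn hYZn).mpr hZnnz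
  · rintro (h | ⟨Z, hZsub, hZsd, hZenc, hZnz⟩)
    · left
      apply subset_antisymm
      · intro z hz
        have hzX : z ∈ X := by rw [← h]; exact Or.inl hz
        exact hSf1 z hz hzX
      · intro z hz
        have hzX : z ∈ S ∪ (X \ X') := by rw [h]; exact hX' hz
        rcases hzX with h' | h'
        · exact h'
        · exact (h'.2 hz).elim
    · right
      have hmem : ∀ z, (z ∈ S ∨ z ∈ X \ X') ↔ ((z ∈ X ∧ z ∉ Z) ∨ (z ∈ Z ∧ z ∉ X)) := by
        intro z
        rw [← Set.mem_union, hZsd, Set.mem_symmDiff]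
      have hXZ : X ∩ Z = X' ∩ Z := by
        ext z
        constructor
        · rintro ⟨hzX, hzZ⟩
          refine ⟨?_, hzZ⟩
          have hnot : ¬(z ∈ S ∨ z ∈ X \ X') := by
            rw [hmem z]
            rintro (⟨-, h2⟩ | ⟨-, h2⟩)
            · exact h2 hzZ
            · exact h2 hzX
          by_contra hzX'
          exact hnot (Or.inr ⟨hzX, hzX'⟩)
        · rintro ⟨hzX', hzZ⟩
          exact ⟨hX' hzX', hzZ⟩
      have hYZ : Y ∩ Z = Y' ∩ Z := by
        ext z
        constructor
        · rintro ⟨hzY, hzZ⟩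
          have hzX : z ∉ X := fun h => hXYf z h hzY
          have hz' : z ∈ S ∨ z ∈ X \ X' := (hmem z).mpr (Or.inr ⟨hzZ, hzX⟩)
          rcases hz' with h' | h'
          · exact ⟨hSf2 z h' hzX, hzZ⟩
          · exact (hzX h'.1).elim
        · rintro ⟨hzY', hzZ⟩
          exact ⟨hY' hzY', hzZ⟩
      have hZsub' : Z ⊆ X' ∪ Y' := by
        intro z hz
        rcases hZsub hz with h' | h'
        · have hx : z ∈ X' ∩ Z := by rw [← hXZ]; exact ⟨h', hz⟩
          exact Or.inl hx.1
        · have hy : z ∈ Y' ∩ Z := by rw [← hYZ]; exact ⟨h', hz⟩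
          exact Or.inr hy.1
      have hsd' : S = symmDiff X' Z := by
        ext z
        rw [Set.mem_symmDiff]
        constructor
        · intro hz
          by_cases hzX : z ∈ X
          · have hzX' : z ∈ X' := hSf1 z hz hzX
            rcases (hmem z).mp (Or.inl hz) with ⟨-, h2⟩ | ⟨-, h2⟩
            · exact Or.inl ⟨hzX', h2⟩
            · exact (h2 hzX).elim
          · rcases (hmem z).mp (Or.inl hz) with ⟨h1, -⟩ | ⟨h1, -⟩
            · exact (hzX h1).elim
            · exact Or.inr ⟨h1, fun h => hzX (hX' h)⟩
        · rintro (⟨h1, h2⟩ | ⟨h1, h2⟩)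
          · rcases (hmem z).mpr (Or.inl ⟨hX' h1, h2⟩) with h' | h'
            · exact h'
            · exact (h'.2 h1).elim
          · have hzY' : z ∈ Y' := by
              rcases hZsub' h1 with h' | h'
              · exact (h2 h').elim
              · exact h'
            have hzX : z ∉ X := fun h => hXY'f z h hzY'
            rcases (hmem z).mpr (Or.inr ⟨h1, hzX⟩) with h' | h'
            · exact h'
            · exact (hzX h'.1).elim
      refine ⟨Z, hZsub', hsd', ?_, ?_⟩
      · rw [← hXZ, ← hYZ]; exact hZenc
      · exact (nonzeroSubdet_congr hXZ hYZ).mp hZnz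

lemma no_deletable (P : PartialField) (M N : Matroid α) (a b x y : α) (B : Set α)
    (A : α → α → P.R) (st : Setup P M N a b x y B A)
    (hno : ∀ e ∈ (del M {a, b}).E, e ∉ ({x, y} : Set α) → ¬ Robust N (del M {a, b}) B e)
    {e : α} (he : e ∈ (del M {a, b}).E)
    (hdel : HasNMinor (del (del M {a, b}) {e}) N) : False := by
  classical
  have hmem2 : ∀ z : α, z ∈ ({a, b} : Set α) ↔ z = a ∨ z = b := fun z => by simp
  have hfinE : M.E.Finite := st.mFin.ground_finite
  have hB := st.hB
  have hBE : B ⊆ M.E \ {a, b} := hB.subset_ground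
  have haB : a ∉ B := fun h => (hBE h).2 ((hmem2 a).mpr (Or.inl rfl))
  have hbB : b ∉ B := fun h => (hBE h).2 ((hmem2 b).mpr (Or.inr rfl))
  obtain ⟨N', X', Y', hiso, hminor, hNE, hX'base, hX'B, hY'sub, hPM, hrepN⟩ := st.hComp.repN
  have hrepa := st.hComp.repa
  have hfinQa : (del M {a}).E.Finite := hfinE.subset diff_subset
  have hY'Ya : Y' ⊆ (M.E \ B) \ {a} := by
    intro z hz
    exact ⟨(hY'sub hz).1, fun h => (hY'sub hz).2 ((hmem2 z).mpr (Or.inl h))⟩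
  set W := ((M.E \ B) \ {a}) \ Y' with hWdef
  have hN'eq : N' = del (con (del M {a}) (B \ X')) W :=
    represents_minor_eq hfinQa hrepa hrepN hX'B hY'Ya
  have hQaB : (del M {a}).IsBase B := (hrepa.2.2 B).mpr (Or.inl rfl)
  have hbW : b ∈ W := by
    refine ⟨⟨⟨st.hbE, hbB⟩, fun h => st.hab (Set.mem_singleton_iff.mp h).symm⟩,
      fun h => (hY'sub h).2 ((hmem2 b).mpr (Or.inr rfl))⟩
  have hWsub : W ⊆ {b} := by
    intro d hd
    by_contra hdb
    have hdB : d ∉ B := hd.1.1.2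
    have hdE : d ∈ M.E := hd.1.1.1
    have hda : d ≠ a := fun h => hd.1.2 (Set.mem_singleton_iff.mpr h)
    have hdb' : d ≠ b := fun h => hdb (Set.mem_singleton_iff.mpr h)
    have hbd : ({b, d} : Set α) ⊆ W := by
      intro z hz
      rcases Set.mem_insert_iff.mp hz with rfl | hz
      · exact hbW
      · rw [Set.mem_singleton_iff] at hz
        subst hz
        exact hd
    have hDdisj : Disjoint B ({b, d} : Set α) := by
      rw [disjoint_right]
      intro z hz
      rcases Set.mem_insert_iff.mp hz with rfl | hz'
      · exact hbB
      · rw [Set.mem_singleton_iff] at hz'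
        subst hz'
        exact hdB
    have step1 : N' = del (del (con (del M {a}) (B \ X')) {b, d}) (W \ {b, d}) := by
      rw [del_del, union_diff_cancel hbd]
      exact hN'eq
    have step2 : del (con (del M {a}) (B \ X')) {b, d}
        = con (del (del M {a}) {b, d}) (B \ X') :=
      con_del_comm' hQaB diff_subset hDdisj hfinQa
    have step3 : del (del M {a}) {b, d} = del (del M {a, b}) {d} := by
      rw [del_del, del_del]
      congr 1
      ext z
      simp only [Set.mem_union, Set.mem_insert_iff, Set.mem_singleton_iff]
      tauto
    have hN'min : N' = del (con (del (del M {a, b}) {d}) (B \ X')) (W \ {b, d}) := by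
      rw [step1, step2, step3]
    have hdE' : d ∈ (del M {a, b}).E := by
      refine ⟨hdE, fun h => ?_⟩
      rcases (hmem2 d).mp h with h1 | h1
      · exact hda h1
      · exact hdb' h1
    have hrob : Robust N (del M {a, b}) B d := by
      right
      refine ⟨⟨hdE', hdB⟩, N', ⟨B \ X', W \ {b, d}, ?_, ?_, ?_, hN'min⟩, hiso⟩
      · rw [disjoint_left]
        intro z hz hz2
        exact hz2.1.1.1.2 hz.1
      · intro z hz
        refine ⟨⟨(hBE hz.1).1, (hBE hz.1).2⟩, fun h => ?_⟩
        rw [Set.mem_singleton_iff] at h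
        subst h
        exact hdB hz.1
      · intro z hz
        have h1 : z ∈ M.E := hz.1.1.1.1
        have hna : z ∉ ({a} : Set α) := hz.1.1.2
        have hnbd : z ∉ ({b, d} : Set α) := hz.2
        refine ⟨⟨h1, fun h => ?_⟩, fun h => ?_⟩
        · rcases (hmem2 z).mp h with h1' | h1'
          · exact hna (Set.mem_singleton_iff.mpr h1')
          · exact hnbd (Set.mem_insert_iff.mpr (Or.inl h1'))
        · exact hnbd (Set.mem_insert_iff.mpr (Or.inr h))
    refine hno d hdE' (fun h => ?_) hrob
    rcases Set.mem_insert_iff.mp h with h1 | h1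
    · subst h1
      exact hdB st.hx
    · rw [Set.mem_singleton_iff] at h1
      subst h1
      exact hdB st.hy
  have hY'eq : Y' = (M.E \ {a, b}) \ B := by
    apply subset_antisymm
    · intro z hz
      exact ⟨⟨(hY'sub hz).1.1, (hY'sub hz).2⟩, (hY'sub hz).1.2⟩
    · intro z hz
      by_contra hzY'
      have hzW : z ∈ W := by
        refine ⟨⟨⟨hz.1.1, hz.2⟩, fun h => hz.1.2 ((hmem2 z).mpr (Or.inl (Set.mem_singleton_iff.mp h)))⟩, hzY'⟩
      have hzb := Set.mem_singleton_iff.mp (hWsub hzW)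
      exact hz.1.2 ((hmem2 z).mpr (Or.inr hzb))
  -- the ledger
  obtain ⟨N₂, ⟨C₁, D₁, hdj₁, hC₁, hD₁, hN₂⟩, hiso₂⟩ := hdel
  have hC₁' : C₁ ⊆ (M.E \ {a, b}) \ {e} := hC₁
  have hD₁' : D₁ ⊆ (M.E \ {a, b}) \ {e} := hD₁
  have hN₂E : N₂.E = (((M.E \ {a, b}) \ {e}) \ C₁) \ D₁ := by
    rw [hN₂, del_ground', con_ground']
    rfl
  obtain ⟨N₄, ⟨C₄, D₄, -, -, -, hN₄⟩, hiso₄⟩ := st.hNminor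
  have hN₄E : N₄.E ⊆ M.E \ {a, b} := by
    rw [hN₄, del_ground', con_ground']
    exact diff_subset.trans diff_subset
  have hcard4 : 4 ≤ (M.E \ {a, b}).encard :=
    st.hNcard.trans (hiso₄.ground_encard.symm.le.trans (encard_mono hN₄E))
  have hfinE' : (del M {a, b}).E.Finite := hfinE.subset diff_subset
  obtain ⟨B₃, hB₃, heB₃⟩ := exists_base_not_mem st.h3conn hfinE' hcard4 he
  have hB₃del : (del (del M {a, b}) {e}).IsBase B₃ :=
    base_del_of_base hB₃ (Set.disjoint_singleton_right.mpr heB₃)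
  obtain ⟨Bc, hBc⟩ := (con (del (del M {a, b}) {e}) C₁).exists_isBase
  obtain ⟨Bn₂, hBn₂⟩ := N₂.exists_isBase
  have hBn₂' : (del (con (del (del M {a, b}) {e}) C₁) D₁).IsBase Bn₂ := by rwa [← hN₂]
  have hfing : (del (del M {a, b}) {e}).E.Finite :=
    hfinE.subset (diff_subset.trans diff_subset)
  have I1 : B₃.encard ≤ Bc.encard + C₁.encard := base_con_encard hfing hB₃del hBc hC₁
  have I2 : Bc.encard ≤ Bn₂.encard + D₁.encard := base_del_encard hBc hBn₂'
  have E7 : B₃.encard = B.encard := hB₃.encard_eq_encard_of_isBase hB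
  obtain ⟨T2, hT2, hT2e⟩ := hiso₂.exists_base_encard hBn₂
  obtain ⟨T1, hT1, hT1e⟩ := hiso.exists_base_encard hX'base
  have E8 : Bn₂.encard = X'.encard := by
    rw [← hT2e, hT2.encard_eq_encard_of_isBase hT1, hT1e]
  have hD₁sub : D₁ ⊆ ((M.E \ {a, b}) \ {e}) \ C₁ := subset_diff.mpr ⟨hD₁', hdj₁.symm⟩
  have E1 : ((((M.E \ {a, b}) \ {e}) \ C₁) \ D₁).encard + D₁.encard
      = (((M.E \ {a, b}) \ {e}) \ C₁).encard :=
    Set.encard_diff_add_encard_of_subset hD₁sub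
  have E2 : (((M.E \ {a, b}) \ {e}) \ C₁).encard + C₁.encard
      = ((M.E \ {a, b}) \ {e}).encard :=
    Set.encard_diff_add_encard_of_subset hC₁'
  have heE : e ∈ M.E \ {a, b} := he
  have E3 : ((M.E \ {a, b}) \ {e}).encard + 1 = (M.E \ {a, b}).encard :=
    Set.encard_diff_singleton_add_one heE
  have E4 : ((M.E \ {a, b}) \ B).encard + B.encard = (M.E \ {a, b}).encard :=
    Set.encard_diff_add_encard_of_subset hBE
  have E5 : N'.E.encard = X'.encard + ((M.E \ {a, b}) \ B).encard := by
    rw [hNE, hY'eq, Set.encard_union_eq]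
    exact disjoint_of_subset_left hX'B Set.disjoint_sdiff_right
  have E6 : N₂.E.encard = N'.E.encard := by
    rw [hiso₂.ground_encard, hiso.ground_encard]
  have E0 : N₂.E.encard = ((((M.E \ {a, b}) \ {e}) \ C₁) \ D₁).encard := by rw [hN₂E]
  -- pass to ℕ
  have hsub1 : (((M.E \ {a, b}) \ {e}) \ C₁) \ D₁ ⊆ M.E :=
    diff_subset.trans (diff_subset.trans (diff_subset.trans diff_subset))
  have hsub2 : ((M.E \ {a, b}) \ {e}) \ C₁ ⊆ M.E :=
    diff_subset.trans (diff_subset.trans diff_subset)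
  have hsub3 : (M.E \ {a, b}) \ {e} ⊆ M.E := diff_subset.trans diff_subset
  have hsub4 : (M.E \ {a, b}) \ B ⊆ M.E := diff_subset.trans diff_subset
  have hsubE' : M.E \ {a, b} ⊆ M.E := diff_subset
  have hsubB : B ⊆ M.E := hBE.trans diff_subset
  have hsubC₁ : C₁ ⊆ M.E := hC₁'.trans hsub3
  have hsubD₁ : D₁ ⊆ M.E := hD₁'.trans hsub3
  have hsubB₃ : B₃ ⊆ M.E := hB₃.subset_ground.trans diff_subset
  have hsubBc : Bc ⊆ M.E := hBc.subset_ground.trans hsub2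
  have hsubN₂ : N₂.E ⊆ M.E := hN₂E.subset.trans hsub1
  have hsubBn₂ : Bn₂ ⊆ M.E := hBn₂.subset_ground.trans hsubN₂
  have hsubX' : X' ⊆ M.E := hX'B.trans hsubB
  have hsubN' : N'.E ⊆ M.E := by
    rw [hNE, hY'eq]
    exact union_subset hsubX' hsub4
  have hc : ∀ {s : Set α}, s ⊆ M.E → s.encard = (s.ncard : ℕ∞) :=
    fun h => ((hfinE.subset h).cast_ncard_eq).symm
  rw [hc hsub1, hc hsubD₁, hc hsub2] at E1
  rw [hc hsub2, hc hsubC₁, hc hsub3] at E2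
  rw [hc hsub3, hc hsubE'] at E3
  rw [hc hsub4, hc hsubB, hc hsubE'] at E4
  rw [hc hsubN', hc hsubX', hc hsub4] at E5
  rw [hc hsubN₂, hc hsubN'] at E6
  rw [hc hsubB₃, hc hsubB] at E7
  rw [hc hsubBn₂, hc hsubX'] at E8
  rw [hc hsubN₂, hc hsub1] at E0
  rw [hc hsubB₃, hc hsubBc, hc hsubC₁] at I1
  rw [hc hsubBc, hc hsubBn₂, hc hsubD₁] at I2
  have e1 : ((((M.E \ {a, b}) \ {e}) \ C₁) \ D₁).ncard + D₁.ncard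
      = (((M.E \ {a, b}) \ {e}) \ C₁).ncard := by exact_mod_cast E1
  have e2 : (((M.E \ {a, b}) \ {e}) \ C₁).ncard + C₁.ncard
      = ((M.E \ {a, b}) \ {e}).ncard := by exact_mod_cast E2
  have e3 : ((M.E \ {a, b}) \ {e}).ncard + 1 = (M.E \ {a, b}).ncard := by exact_mod_cast E3
  have e4 : ((M.E \ {a, b}) \ B).ncard + B.ncard = (M.E \ {a, b}).ncard := by exact_mod_cast E4
  have e5 : N'.E.ncard = X'.ncard + ((M.E \ {a, b}) \ B).ncard := by exact_mod_cast E5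
  have e6 : N₂.E.ncard = N'.E.ncard := by exact_mod_cast E6
  have e7 : B₃.ncard = B.ncard := by exact_mod_cast E7
  have e8 : Bn₂.ncard = X'.ncard := by exact_mod_cast E8
  have e0 : N₂.E.ncard = ((((M.E \ {a, b}) \ {e}) \ C₁) \ D₁).ncard := by exact_mod_cast E0
  have i1 : B₃.ncard ≤ Bc.ncard + C₁.ncard := by exact_mod_cast I1
  have i2 : Bc.ncard ≤ Bn₂.ncard + D₁.ncard := by exact_mod_cast I2
  omega

end Main

/-- Lemma 6.4, `norobustfragile`. -/
theorem statement_19 (P : PartialField) (M N : Matroid α) (a b x y : α) (B : Set α)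
    (A : α → α → P.R) (st : Setup P M N a b x y B A)
    (hrb : RobustBasis P M N a b B A x y)
    (hno : ∀ e ∈ (del M {a, b}).E, e ∉ ({x, y} : Set α) → ¬ Robust N (del M {a, b}) B e) :
    NFragile N (del M {a, b}) := by
  refine ⟨st.hNminor, fun e he hflex => ?_⟩
  exact no_deletable P M N a b x y B A st hno he hflex.1

end ExcludedMinorsFragile
end
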